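/- Let m ≥ 1, let A_{2m}(ℂ) = {S ∈ M_{2m}(ℂ) : Sᵀ = -S} be the complex vector space of skew-symmetric complex 2m×2m matrices (of complex dimension m(2m-1)), and let J = [[0, I_m],[-I_m, 0]] be the standard symplectic matrix. For S ∈ A_{2m}(ℂ), the map T ↦ S·J·T·J·S maps A_{2m}(ℂ) to itself, and its determinant as a ℂ-linear endomorphism of A_{2m}(ℂ) equals (det S)^{2m-1}. -/

import Mathlib

set_option linter.unusedSectionVars false
set_option maxHeartbeats 1000000

open Matrix

/-- The subspace of skew-symmetric matrices. -/
def skewMatrices (n : Type*) (R : Type*) [CommRing R] : Submodule R (Matrix n n R) where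
  carrier := {X | Xᵀ = -X}
  add_mem' := by
    intro a b ha hb
    simp only [Set.mem_setOf_eq] at *
    rw [Matrix.transpose_add, ha, hb, neg_add]
  zero_mem' := by simp
  smul_mem' := by
    intro c a ha
    simp only [Set.mem_setOf_eq] at *
    rw [Matrix.transpose_smul, ha, smul_neg]

section Aux

variable {ι : Type*} [Fintype ι]

omit [Fintype ι] in
lemma mem_skewMatrices {X : Matrix ι ι ℂ} : X ∈ skewMatrices ι ℂ ↔ Xᵀ = -X := Iff.rfl

/-- The congruence map `T ↦ A T Aᵀ` as an endomorphism of skew matrices. -/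
noncomputable def skewCongr (A : Matrix ι ι ℂ) : skewMatrices ι ℂ →ₗ[ℂ] skewMatrices ι ℂ where
  toFun T := ⟨A * (T : Matrix ι ι ℂ) * Aᵀ, by
    have hT : (T : Matrix ι ι ℂ)ᵀ = -(T : Matrix ι ι ℂ) := T.2
    rw [mem_skewMatrices]
    simp [Matrix.transpose_mul, hT, Matrix.mul_assoc]⟩
  map_add' T U := by
    apply Subtype.ext
    simp [Matrix.mul_add, Matrix.add_mul]
  map_smul' c T := by
    apply Subtype.ext
    simp [Matrix.mul_smul, Matrix.smul_mul]

@[simp] lemma skewCongr_coe (A : Matrix ι ι ℂ) (T : skewMatrices ι ℂ) :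
    (skewCongr A T : Matrix ι ι ℂ) = A * (T : Matrix ι ι ℂ) * Aᵀ := rfl

lemma skewCongr_mul (A B : Matrix ι ι ℂ) :
    skewCongr (A * B) = (skewCongr A).comp (skewCongr B) := by
  apply LinearMap.ext; intro T
  apply Subtype.ext
  simp [Matrix.transpose_mul, Matrix.mul_assoc]

lemma skewCongr_one [DecidableEq ι] : skewCongr (1 : Matrix ι ι ℂ) = LinearMap.id := by
  apply LinearMap.ext; intro T
  apply Subtype.ext
  simp


section Ordered

variable [LinearOrder ι]

/-- Skew matrices are determined by their above-diagonal entries. -/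
noncomputable def skewEquivFun : skewMatrices ι ℂ ≃ₗ[ℂ] ({p : ι × ι // p.1 < p.2} → ℂ) where
  toFun T p := (T : Matrix ι ι ℂ) p.1.1 p.1.2
  map_add' T U := by funext p; simp
  map_smul' c T := by funext p; simp
  invFun f := ⟨Matrix.of fun i j =>
      if h : i < j then f ⟨(i, j), h⟩ else if h : j < i then -f ⟨(j, i), h⟩ else 0, by
    rw [mem_skewMatrices]
    ext i j
    rcases lt_trichotomy i j with h | h | h
    · have h' := lt_asymm h
      simp [h, h']
    · subst h; simp
    · have h' := lt_asymm h
      simp [h, h']⟩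
  left_inv T := by
    apply Subtype.ext
    ext i j
    have hT : (T : Matrix ι ι ℂ)ᵀ = -(T : Matrix ι ι ℂ) := T.2
    rcases lt_trichotomy i j with h | h | h
    · simp [h]
    · subst h
      have h2 : (T : Matrix ι ι ℂ) i i = -(T : Matrix ι ι ℂ) i i := by
        conv_lhs => rw [← Matrix.transpose_apply (T : Matrix ι ι ℂ) i i, hT]
        simp
      have h3 : (T : Matrix ι ι ℂ) i i = 0 := by
        have := add_self_eq_zero.mp (by linear_combination h2)
        exact this
      simp [h3]
    · have h' := lt_asymm h
      have h2 : (T : Matrix ι ι ℂ) j i = -(T : Matrix ι ι ℂ) i j := by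
        conv_lhs => rw [← Matrix.transpose_apply (T : Matrix ι ι ℂ) i j, hT]
        simp
      simp [h, h', h2]
  right_inv f := by
    funext p
    simp [p.2]

@[simp] lemma skewEquivFun_apply (T : skewMatrices ι ℂ) (p : {p : ι × ι // p.1 < p.2}) :
    skewEquivFun T p = (T : Matrix ι ι ℂ) p.1.1 p.1.2 := rfl

/-- Basis of skew matrices indexed by ordered pairs. -/
noncomputable def skewBasis : Module.Basis {p : ι × ι // p.1 < p.2} ℂ (skewMatrices ι ℂ) :=
  Module.Basis.ofEquivFun skewEquivFun


lemma prod_pairs (d : ι → ℂ) :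
    ∏ p : {p : ι × ι // p.1 < p.2}, (d p.1.1 * d p.1.2) = (∏ i, d i) ^ (Fintype.card ι - 1) := by
  classical
  have h0 : ∏ p : {p : ι × ι // p.1 < p.2}, (d p.1.1 * d p.1.2)
      = ∏ p ∈ Finset.univ.filter (fun p : ι × ι => p.1 < p.2), (d p.1 * d p.2) := by
    symm
    apply Finset.prod_subtype
    intro x; simp
  have h1 : ∏ p ∈ Finset.univ.filter (fun p : ι × ι => p.1 < p.2), d p.2
      = ∏ p ∈ Finset.univ.filter (fun p : ι × ι => p.2 < p.1), d p.1 := by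
    apply Finset.prod_nbij' (fun p => (p.2, p.1)) (fun p => (p.2, p.1)) <;> simp
  have h2 : Finset.univ.filter (fun p : ι × ι => p.1 < p.2) ∪
      Finset.univ.filter (fun p : ι × ι => p.2 < p.1)
      = Finset.univ.filter (fun p : ι × ι => p.1 ≠ p.2) := by
    ext p
    simp only [Finset.mem_union, Finset.mem_filter, Finset.mem_univ, true_and]
    constructor
    · rintro (h | h)
      · exact ne_of_lt h
      · exact ne_of_gt h
    · exact fun h => lt_or_gt_of_ne h
  have hdisj : Disjoint (Finset.univ.filter (fun p : ι × ι => p.1 < p.2))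
      (Finset.univ.filter (fun p : ι × ι => p.2 < p.1)) := by
    rw [Finset.disjoint_filter]
    intro p _ h1 h2
    exact lt_asymm h1 h2
  have h3 : ∏ p ∈ Finset.univ.filter (fun p : ι × ι => p.1 ≠ p.2), d p.1
      = (∏ i, d i) ^ (Fintype.card ι - 1) := by
    rw [Finset.prod_filter, Fintype.prod_prod_type]
    rw [← Finset.prod_pow]
    apply Finset.prod_congr rfl
    intro i _
    rw [← Finset.prod_filter]
    have hset : Finset.filter (fun x => (i, x).1 ≠ (i, x).2) Finset.univ
        = Finset.univ.erase i := by
      ext j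
      simp [eq_comm]
    rw [hset]
    have hc : ∏ j ∈ Finset.univ.erase i, d (i, j).1 = d i ^ (Finset.univ.erase i).card :=
      Finset.prod_const (d i)
    rw [hc, Finset.card_erase_of_mem (Finset.mem_univ i), Finset.card_univ]
  calc ∏ p : {p : ι × ι // p.1 < p.2}, (d p.1.1 * d p.1.2)
      = (∏ p ∈ Finset.univ.filter (fun p : ι × ι => p.1 < p.2), d p.1) *
        ∏ p ∈ Finset.univ.filter (fun p : ι × ι => p.1 < p.2), d p.2 := by
        rw [h0, Finset.prod_mul_distrib]
    _ = ∏ p ∈ Finset.univ.filter (fun p : ι × ι => p.1 ≠ p.2), d p.1 := by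
        rw [h1, ← Finset.prod_union hdisj, h2]
    _ = (∏ i, d i) ^ (Fintype.card ι - 1) := h3

lemma det_skewCongr_diagonal [DecidableEq ι] (d : ι → ℂ) :
    LinearMap.det (skewCongr (Matrix.diagonal d)) = (∏ i, d i) ^ (Fintype.card ι - 1) := by
  rw [← LinearMap.det_toMatrix (skewBasis (ι := ι))]
  have key : LinearMap.toMatrix skewBasis skewBasis (skewCongr (Matrix.diagonal d))
      = Matrix.diagonal (fun p : {p : ι × ι // p.1 < p.2} => d p.1.1 * d p.1.2) := by
    ext p q
    rw [LinearMap.toMatrix_apply]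
    show skewEquivFun _ p = _
    rw [skewEquivFun_apply]
    set f : {p : ι × ι // p.1 < p.2} → ℂ := Pi.single q 1 with hf
    have hq : ((skewBasis q : skewMatrices ι ℂ) : Matrix ι ι ℂ)
        = Matrix.of fun i j =>
          if h : i < j then f ⟨(i, j), h⟩
          else if h : j < i then -f ⟨(j, i), h⟩ else 0 := by
      rw [skewBasis, Module.Basis.coe_ofEquivFun]
      rfl
    rw [skewCongr_coe, Matrix.diagonal_transpose, hq, Matrix.mul_diagonal,
      Matrix.diagonal_mul, Matrix.of_apply, dif_pos p.2]
    have hpe : (⟨((p : ι × ι).1, (p : ι × ι).2), p.2⟩ : {p : ι × ι // p.1 < p.2}) = p := by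
      apply Subtype.ext; exact Prod.mk.eta
    rw [hpe, hf, Pi.single_apply, Matrix.diagonal_apply]
    by_cases hpq : p = q <;> simp [hpq]
  rw [key, Matrix.det_diagonal, prod_pairs]

lemma diag_transvection_conj [DecidableEq ι] (i j : ι) (hij : i ≠ j) (c : ℂ) :
    Matrix.diagonal (fun k => if k = i then (2:ℂ) else 1) * Matrix.transvection i j c *
      Matrix.diagonal (fun k => if k = i then (2:ℂ)⁻¹ else 1)
      = Matrix.transvection i j (2 * c) := by
  ext a b
  rw [Matrix.mul_diagonal, Matrix.diagonal_mul]
  simp only [Matrix.transvection, Matrix.add_apply, Matrix.one_apply, Matrix.single,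
    Matrix.of_apply]
  split_ifs <;>
    (try obtain ⟨rfl, rfl⟩ := ‹_ ∧ _›) <;> subst_vars <;>
    first
      | (exfalso; exact ‹¬ _ = _› rfl)
      | norm_num

lemma det_skewCongr_transvection [DecidableEq ι] (i j : ι) (hij : i ≠ j) (c : ℂ) :
    LinearMap.det (skewCongr (Matrix.transvection i j c)) = 1 := by
  set a := LinearMap.det (skewCongr (Matrix.transvection i j c)) with ha
  have hmul : ∀ c₁ c₂ : ℂ, LinearMap.det (skewCongr (Matrix.transvection i j (c₁ + c₂)))
      = LinearMap.det (skewCongr (Matrix.transvection i j c₁)) *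
        LinearMap.det (skewCongr (Matrix.transvection i j c₂)) := by
    intro c₁ c₂
    rw [← Matrix.transvection_mul_transvection_same i j hij, skewCongr_mul, LinearMap.det_comp]
  have hconj : LinearMap.det (skewCongr (Matrix.transvection i j (2 * c))) = a := by
    rw [← diag_transvection_conj i j hij c, skewCongr_mul, skewCongr_mul,
      LinearMap.det_comp, LinearMap.det_comp]
    have hdd : Matrix.diagonal (fun k => if k = i then (2:ℂ) else 1) *
        Matrix.diagonal (fun k => if k = i then (2:ℂ)⁻¹ else 1) = 1 := by
      rw [Matrix.diagonal_mul_diagonal]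
      have h2 : (fun k => (if k = i then (2:ℂ) else 1) * if k = i then (2:ℂ)⁻¹ else 1)
          = fun _ => (1:ℂ) := by
        funext k
        by_cases h : k = i <;> simp [h]
      rw [h2, Matrix.diagonal_one]
    have h1 : LinearMap.det (skewCongr (Matrix.diagonal (fun k => if k = i then (2:ℂ) else 1))) *
        LinearMap.det (skewCongr (Matrix.diagonal (fun k => if k = i then (2:ℂ)⁻¹ else 1))) = 1 := by
      rw [← LinearMap.det_comp, ← skewCongr_mul, hdd, skewCongr_one, LinearMap.det_id]
    rw [← ha]
    calc LinearMap.det (skewCongr (Matrix.diagonal (fun k => if k = i then (2:ℂ) else 1))) * a *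
          LinearMap.det (skewCongr (Matrix.diagonal (fun k => if k = i then (2:ℂ)⁻¹ else 1)))
        = a * (LinearMap.det (skewCongr (Matrix.diagonal (fun k => if k = i then (2:ℂ) else 1))) *
          LinearMap.det (skewCongr (Matrix.diagonal (fun k => if k = i then (2:ℂ)⁻¹ else 1)))) := by
          ring
      _ = a := by rw [h1, mul_one]
  have h4 : a * a = a := by
    have h5 := hmul c c
    rw [show c + c = 2 * c by ring, hconj] at h5
    exact h5.symm
  have hne : a ≠ 0 := by
    intro h0
    have h6 := hmul c (-c)
    rw [add_neg_cancel, Matrix.transvection_zero, skewCongr_one, LinearMap.det_id, ← ha, h0,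
      zero_mul] at h6
    exact one_ne_zero h6
  exact mul_left_cancel₀ hne (by rw [h4, mul_one])

lemma det_skewCongr_list_prod [DecidableEq ι] (L : List (Matrix.TransvectionStruct ι ℂ)) :
    LinearMap.det (skewCongr (L.map Matrix.TransvectionStruct.toMatrix).prod) = 1 := by
  induction L with
  | nil => rw [List.map_nil, List.prod_nil, skewCongr_one, LinearMap.det_id]
  | cons t L ih =>
    rw [List.map_cons, List.prod_cons, skewCongr_mul, LinearMap.det_comp, ih, mul_one]
    rcases t with ⟨ti, tj, hij, tc⟩
    rw [Matrix.TransvectionStruct.toMatrix_mk]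
    exact det_skewCongr_transvection ti tj hij tc

/-- Key lemma: the determinant of the congruence action on skew matrices. -/
lemma det_skewCongr [DecidableEq ι] (A : Matrix ι ι ℂ) :
    LinearMap.det (skewCongr A) = A.det ^ (Fintype.card ι - 1) := by
  obtain ⟨L, L', D, h⟩ := Matrix.Pivot.exists_list_transvec_mul_diagonal_mul_list_transvec A
  rw [h, skewCongr_mul, skewCongr_mul, LinearMap.det_comp, LinearMap.det_comp,
    det_skewCongr_list_prod, det_skewCongr_list_prod, det_skewCongr_diagonal,
    one_mul, mul_one, Matrix.det_mul, Matrix.det_mul,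
    Matrix.TransvectionStruct.det_toMatrix_prod, Matrix.TransvectionStruct.det_toMatrix_prod,
    Matrix.det_diagonal, one_mul, mul_one]

end Ordered

end Aux

/-- For `S` skew-symmetric complex `2m × 2m` and `J` the standard symplectic
matrix, the map `T ↦ S·J·T·J·S` maps `A_{2m}(ℂ)` to itself, and its determinant as a
ℂ-linear endomorphism of `A_{2m}(ℂ)` equals `(det S)^(2m-1)`. -/
theorem stmt_12 (m : ℕ) (hm : 1 ≤ m)
    (S : Matrix (Fin m ⊕ Fin m) (Fin m ⊕ Fin m) ℂ) (hS : Sᵀ = -S)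
    (J : Matrix (Fin m ⊕ Fin m) (Fin m ⊕ Fin m) ℂ)
    (hJ : J = Matrix.fromBlocks 0 1 (-1) 0) :
    (∀ T : Matrix (Fin m ⊕ Fin m) (Fin m ⊕ Fin m) ℂ, Tᵀ = -T →
      (S * J * T * J * S)ᵀ = -(S * J * T * J * S))
    ∧ ∀ P : skewMatrices (Fin m ⊕ Fin m) ℂ →ₗ[ℂ] skewMatrices (Fin m ⊕ Fin m) ℂ,
        (∀ T : skewMatrices (Fin m ⊕ Fin m) ℂ,
          (P T : Matrix (Fin m ⊕ Fin m) (Fin m ⊕ Fin m) ℂ)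
            = S * J * (T : Matrix (Fin m ⊕ Fin m) (Fin m ⊕ Fin m) ℂ) * J * S) →
        LinearMap.det P = S.det ^ (2 * m - 1) := by
  have hJT : Jᵀ = -J := by
    rw [hJ, Matrix.fromBlocks_transpose]
    simp [Matrix.fromBlocks_neg]
  constructor
  · intro T hT
    simp only [Matrix.transpose_mul, hS, hT, hJT, Matrix.neg_mul, Matrix.mul_neg, neg_neg]
    simp [Matrix.mul_assoc]
  · intro P hP
    letI : LinearOrder (Fin m ⊕ Fin m) :=
      LinearOrder.lift' (finSumFinEquiv : Fin m ⊕ Fin m ≃ Fin (m + m)) finSumFinEquiv.injective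
    have hPe : P = skewCongr (S * J) := by
      apply LinearMap.ext
      intro T
      apply Subtype.ext
      rw [hP T, skewCongr_coe, Matrix.transpose_mul, hJT, hS]
      simp [Matrix.mul_assoc]
    have hdetJ : J.det = 1 := by
      have hfac : (Matrix.fromBlocks 0 1 (-1) 0 : Matrix (Fin m ⊕ Fin m) (Fin m ⊕ Fin m) ℂ)
          = Matrix.fromBlocks 1 1 0 1 *
            (Matrix.fromBlocks 1 0 (-1) 1 * Matrix.fromBlocks 1 1 0 1) := by
        rw [Matrix.fromBlocks_multiply, Matrix.fromBlocks_multiply]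
        norm_num
      rw [hJ, hfac, Matrix.det_mul, Matrix.det_mul, Matrix.det_fromBlocks_zero₂₁,
        Matrix.det_fromBlocks_zero₁₂]
      simp
    rw [hPe, det_skewCongr, Matrix.det_mul, hdetJ, mul_one, Fintype.card_sum, Fintype.card_fin,
      ← two_mul]
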